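/- Let K be a field of characteristic zero and let A be a finite-dimensional non-unital associative K-algebra. Then there exists a commutative Hopf K-algebra H together with a coaction λ : A → A ⊗ H of H on A such that for every commutative Hopf K-algebra H' and every coaction ψ : A → A ⊗ H' of H' on A, there exists a unique bialgebra homomorphism Φ : H → H' with ψ = (id_A ⊗ Φ) ∘ λ. (A bialgebra homomorphism between Hopf algebras automatically preserves the antipode, so Φ is a Hopf algebra homomorphism.) -/

import Mathlib

/-!
Statement 16: Let `A` be a finite-dimensional non-unital associative algebra over a field
`K` of characteristic zero. Then there exists a commutative Hopf `K`-algebra `H` with a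
coaction `λ : A → A ⊗ H` such that for every commutative Hopf `K`-algebra `H'` and every
coaction `ψ : A → A ⊗ H'` there is a unique bialgebra homomorphism `Φ : H → H'` with
`ψ = (id_A ⊗ Φ) ∘ λ`.
-/

open TensorProduct

universe u

/-- A coaction of a commutative `K`-bialgebra `B` on the non-unital associative algebra `A`:
a non-unital algebra homomorphism `η : A → A ⊗ B` making `A` a right `B`-comodule. -/
def IsAlgCoaction (K : Type u) [Field K]
    (A : Type u) [NonUnitalRing A] [Module K A] [SMulCommClass K A A] [IsScalarTower K A A]
    (B : Type u) [CommRing B] [Bialgebra K B]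
    (η : A →ₙₐ[K] A ⊗[K] B) : Prop :=
  (∀ a : A, TensorProduct.rid K A
      (LinearMap.lTensor A (Coalgebra.counit (R := K) (A := B)) (η a)) = a) ∧
  ∀ a : A, LinearMap.lTensor A (Coalgebra.comul (R := K) (A := B)) (η a) =
    TensorProduct.assoc K A B B (LinearMap.rTensor B (η : A →ₗ[K] A ⊗[K] B) (η a))

/-- A universal coacting commutative Hopf algebra of the non-unital associative
algebra `A`. -/
structure UniversalAlgCoactingHopfAlgebra (K : Type u) [Field K]
    (A : Type u) [NonUnitalRing A] [Module K A] [SMulCommClass K A A] [IsScalarTower K A A] :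
    Type (u + 1) where
  H : Type u
  [commRingH : CommRing H]
  [hopfAlgebraH : HopfAlgebra K H]
  lam : A →ₙₐ[K] A ⊗[K] H
  coaction : IsAlgCoaction K A H lam
  universal : ∀ (H' : Type u) [CommRing H'] [HopfAlgebra K H'], ∀ ψ : A →ₙₐ[K] A ⊗[K] H',
    IsAlgCoaction K A H' ψ →
    ∃! Φ : H →ₐc[K] H', ∀ a : A, ψ a = LinearMap.lTensor A Φ.toLinearMap (lam a)


set_option maxHeartbeats 1000000
set_option synthInstance.maxHeartbeats 400000
set_option linter.unusedSectionVars false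

noncomputable section

namespace UACH

open Matrix

variable (K : Type u) [Field K] (n : ℕ) (m : Fin n → Fin n → Fin n → K)


def Rel {R : Type u} [CommRing R] [Algebra K R] (u : Matrix (Fin n) (Fin n) R) : Prop :=
  ∀ i j r : Fin n, ∑ k, ∑ l, m k l r • (u k i * u l j) = ∑ c, m i j c • u r c

variable {S : Type u} [CommRing S] [Algebra K S]

/-- structure-constant matrices -/
def Mmat (r : Fin n) : Matrix (Fin n) (Fin n) S :=
  Matrix.of fun k l => algebraMap K S (m k l r)

lemma entry1 (u : Matrix (Fin n) (Fin n) S) (i j r : Fin n) :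
    ((uᵀ * Mmat K n m r * u : Matrix (Fin n) (Fin n) S)) i j
      = ∑ k, ∑ l, m k l r • (u k i * u l j) := by
  rw [Matrix.mul_assoc, Matrix.mul_apply]
  refine Finset.sum_congr rfl fun k _ => ?_
  rw [Matrix.mul_apply, Finset.mul_sum]
  refine Finset.sum_congr rfl fun l _ => ?_
  simp only [Matrix.transpose_apply, Mmat, Matrix.of_apply, Algebra.smul_def]
  ring

lemma entry2 (u : Matrix (Fin n) (Fin n) S) (i j r : Fin n) :
    ((∑ c, u r c • Mmat K n m c : Matrix (Fin n) (Fin n) S)) i j = ∑ c, m i j c • u r c := by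
  rw [Matrix.sum_apply]
  refine Finset.sum_congr rfl fun c _ => ?_
  simp only [Matrix.smul_apply, Mmat, Matrix.of_apply, smul_eq_mul, Algebra.smul_def]
  ring

lemma rel_iff (u : Matrix (Fin n) (Fin n) S) :
    Rel K n m u ↔ ∀ r, uᵀ * Mmat K n m r * u = ∑ c, u r c • Mmat K n m c := by
  constructor
  · intro h r
    ext i j
    rw [entry1, entry2, h i j r]
  · intro h i j r
    rw [← entry1, ← entry2, h r]

lemma rel_one : Rel K n m (1 : Matrix (Fin n) (Fin n) S) := by
  rw [rel_iff]
  intro r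
  rw [Matrix.transpose_one, Matrix.one_mul, Matrix.mul_one]
  ext i j
  rw [Matrix.sum_apply]
  simp [Matrix.one_apply]

lemma rel_map {S' : Type u} [CommRing S'] [Algebra K S'] (f : S →ₐ[K] S')
    {u : Matrix (Fin n) (Fin n) S} (hu : Rel K n m u) : Rel K n m (u.map f) := by
  intro i j r
  have := congrArg f (hu i j r)
  simpa only [map_sum, _root_.map_smul, _root_.map_mul, Matrix.map_apply] using this

lemma rel_mul {u v : Matrix (Fin n) (Fin n) S}
    (hu : Rel K n m u) (hv : Rel K n m v) : Rel K n m (u * v) := by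
  rw [rel_iff] at hu hv ⊢
  intro r
  calc (u * v)ᵀ * Mmat K n m r * (u * v)
      = vᵀ * (uᵀ * Mmat K n m r * u) * v := by
        rw [Matrix.transpose_mul]; simp only [Matrix.mul_assoc]
    _ = vᵀ * (∑ c, u r c • Mmat K n m c) * v := by rw [hu r]
    _ = ∑ c, u r c • (vᵀ * Mmat K n m c * v) := by
        rw [Matrix.mul_sum, Matrix.sum_mul]
        refine Finset.sum_congr rfl fun c _ => ?_
        rw [Matrix.mul_smul, Matrix.smul_mul]
    _ = ∑ c, u r c • ∑ d, v c d • Mmat K n m d := by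
        refine Finset.sum_congr rfl fun c _ => ?_
        rw [hv c]
    _ = ∑ c, ∑ d, (u r c * v c d) • Mmat K n m d := by
        refine Finset.sum_congr rfl fun c _ => ?_
        rw [Finset.smul_sum]
        exact Finset.sum_congr rfl fun d _ => (smul_smul _ _ _)
    _ = ∑ d, ∑ c, (u r c * v c d) • Mmat K n m d := by rw [Finset.sum_comm]
    _ = ∑ d, (∑ c, u r c * v c d) • Mmat K n m d := by
        refine Finset.sum_congr rfl fun d _ => ?_
        rw [Finset.sum_smul]
    _ = ∑ d, (u * v) r d • Mmat K n m d := by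
        refine Finset.sum_congr rfl fun d _ => ?_
        rw [Matrix.mul_apply]

lemma rel_inv {u w : Matrix (Fin n) (Fin n) S}
    (hu : Rel K n m u) (h1 : u * w = 1) (h2 : w * u = 1) : Rel K n m w := by
  rw [rel_iff] at hu ⊢
  have key : ∀ r, Mmat K n m r = ∑ c, u r c • (wᵀ * Mmat K n m c * w) := by
    intro r
    calc Mmat K n m r
        = (u * w)ᵀ * Mmat K n m r * (u * w) := by
          rw [h1, Matrix.transpose_one, Matrix.one_mul, Matrix.mul_one]
      _ = wᵀ * (uᵀ * Mmat K n m r * u) * w := by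
          rw [Matrix.transpose_mul]; simp only [Matrix.mul_assoc]
      _ = wᵀ * (∑ c, u r c • Mmat K n m c) * w := by rw [hu r]
      _ = ∑ c, u r c • (wᵀ * Mmat K n m c * w) := by
          rw [Matrix.mul_sum, Matrix.sum_mul]
          refine Finset.sum_congr rfl fun c _ => ?_
          rw [Matrix.mul_smul, Matrix.smul_mul]
  intro s
  calc wᵀ * Mmat K n m s * w
      = ∑ r, (1 : Matrix (Fin n) (Fin n) S) s r • (wᵀ * Mmat K n m r * w) := by
        simp [Matrix.one_apply]
    _ = ∑ r, (w * u) s r • (wᵀ * Mmat K n m r * w) := by rw [h2]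
    _ = ∑ r, ∑ c, (w s c * u c r) • (wᵀ * Mmat K n m r * w) := by
        refine Finset.sum_congr rfl fun r _ => ?_
        rw [Matrix.mul_apply, Finset.sum_smul]
    _ = ∑ c, w s c • ∑ r, u c r • (wᵀ * Mmat K n m r * w) := by
        rw [Finset.sum_comm]
        refine Finset.sum_congr rfl fun c _ => ?_
        rw [Finset.smul_sum]
        refine Finset.sum_congr rfl fun r _ => ?_
        rw [smul_smul]
    _ = ∑ c, w s c • Mmat K n m c := by
        refine Finset.sum_congr rfl fun c _ => ?_
        rw [← key c]


abbrev P : Type u := MvPolynomial ((Fin n × Fin n) ⊕ Unit) K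

/-- generator matrix -/
def Xm : Matrix (Fin n) (Fin n) (P K n) := fun k i => MvPolynomial.X (Sum.inl (k, i))

def T : P K n := MvPolynomial.X (Sum.inr ())

def relPoly (i j r : Fin n) : P K n :=
  (∑ k, ∑ l, m k l r • (Xm K n k i * Xm K n l j)) - ∑ c, m i j c • Xm K n r c

def J : Ideal (P K n) :=
  Ideal.span (insert (T K n * (Xm K n).det - 1)
    (Set.range fun p : Fin n × Fin n × Fin n => relPoly K n m p.1 p.2.1 p.2.2))

def Hb : Type u := P K n ⧸ J K n m

instance : CommRing (Hb K n m) := inferInstanceAs (CommRing (P K n ⧸ J K n m))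
instance : Algebra K (Hb K n m) := inferInstanceAs (Algebra K (P K n ⧸ J K n m))

/-- projection -/
def π : P K n →ₐ[K] Hb K n m := Ideal.Quotient.mkₐ K (J K n m)

def XH : Matrix (Fin n) (Fin n) (Hb K n m) := (Xm K n).map (π K n m)

def tH : Hb K n m := π K n m (T K n)

lemma π_mem_zero {p : P K n} (hp : p ∈ J K n m) : π K n m p = 0 := by
  exact Ideal.Quotient.eq_zero_iff_mem.2 hp

lemma rel_XH : Rel K n m (XH K n m) := by
  intro i j r
  have h : π K n m (relPoly K n m i j r) = 0 :=
    π_mem_zero K n m (Ideal.subset_span (Set.mem_insert_iff.2 (Or.inr ⟨⟨i, j, r⟩, rfl⟩)))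
  have := sub_eq_zero.1 (by simpa [relPoly, map_sum, map_sub] using h)
  simpa [XH, Matrix.map_apply] using this

lemma tH_mul_det : tH K n m * (XH K n m).det = 1 := by
  have h : π K n m (T K n * (Xm K n).det - 1) = 0 :=
    π_mem_zero K n m (Ideal.subset_span (Set.mem_insert _ _))
  have := sub_eq_zero.1 (by simpa [map_sub, _root_.map_mul] using h)
  simpa [tH, XH, AlgHom.map_det] using this

section lift

variable {S : Type u} [CommRing S] [Algebra K S] (u : Matrix (Fin n) (Fin n) S) (s : S)

/-- auxiliary algebra hom on the polynomial ring -/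
def liftAux : P K n →ₐ[K] S :=
  MvPolynomial.aeval (Sum.elim (fun p : Fin n × Fin n => u p.1 p.2) (fun _ => s))

@[simp] lemma liftAux_Xm (k i : Fin n) : liftAux K n u s (Xm K n k i) = u k i := by
  simp [liftAux, Xm]

@[simp] lemma liftAux_T : liftAux K n u s (T K n) = s := by
  simp [liftAux, T]

lemma liftAux_ker (hrel : Rel K n m u) (hdet : s * u.det = 1) :
    ∀ a ∈ J K n m, liftAux K n u s a = 0 := by
  intro a ha
  have hk : J K n m ≤ RingHom.ker (liftAux K n u s).toRingHom := by
    rw [J, Ideal.span_le]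
    rintro p (rfl | ⟨⟨i, j, r⟩, rfl⟩)
    · have h2 : liftAux K n u s ((Xm K n).det) = u.det := by
        rw [AlgHom.map_det]
        congr 1
        ext k i
        simp [Matrix.map_apply]
      simp only [SetLike.mem_coe, RingHom.mem_ker, AlgHom.toRingHom_eq_coe,
        RingHom.coe_coe, map_sub, _root_.map_mul, _root_.map_one, h2, liftAux_T, hdet, sub_self]
    · simp only [SetLike.mem_coe, RingHom.mem_ker, AlgHom.toRingHom_eq_coe,
        RingHom.coe_coe, relPoly, map_sub, map_sum, _root_.map_smul, _root_.map_mul, liftAux_Xm]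
      rw [hrel i j r, sub_self]
  exact RingHom.mem_ker.1 (hk ha)

/-- Lift an assignment (matrix satisfying the relations, with invertible determinant)
to an algebra hom out of `Hb`. -/
def liftH (hrel : Rel K n m u) (hdet : s * u.det = 1) : Hb K n m →ₐ[K] S :=
  Ideal.Quotient.liftₐ (J K n m) (liftAux K n u s) (liftAux_ker K n m u s hrel hdet)

variable (hrel : Rel K n m u) (hdet : s * u.det = 1)

lemma liftH_π (p : P K n) : liftH K n m u s hrel hdet (π K n m p) = liftAux K n u s p := by
  unfold liftH π
  exact AlgHom.congr_fun (Ideal.Quotient.liftₐ_comp (J K n m) (liftAux K n u s)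
    (liftAux_ker K n m u s hrel hdet)) p

@[simp] lemma liftH_x (k i : Fin n) :
    liftH K n m u s hrel hdet (XH K n m k i) = u k i :=
  (liftH_π K n m u s hrel hdet _).trans (liftAux_Xm K n u s k i)

@[simp] lemma liftH_t : liftH K n m u s hrel hdet (tH K n m) = s :=
  (liftH_π K n m u s hrel hdet _).trans (liftAux_T K n u s)

/-- extension principle: two algebra homs out of `Hb` agreeing on generators agree -/
lemma hom_ext {f g : Hb K n m →ₐ[K] S}
    (hx : ∀ k i, f (XH K n m k i) = g (XH K n m k i)) (ht : f (tH K n m) = g (tH K n m)) :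
    f = g := by
  apply Ideal.Quotient.algHom_ext
  apply MvPolynomial.algHom_ext
  rintro (⟨k, i⟩ | ⟨⟩)
  · exact hx k i
  · exact ht

end lift

section structureMaps

/-- matrix defining the comultiplication -/
def Zd : Matrix (Fin n) (Fin n) (Hb K n m ⊗[K] Hb K n m) :=
  (XH K n m).map (Algebra.TensorProduct.includeLeft (R := K) (S := K)) *
    (XH K n m).map (Algebra.TensorProduct.includeRight (R := K))

lemma rel_Zd : Rel K n m (Zd K n m) :=
  rel_mul K n m (rel_map K n m _ (rel_XH K n m)) (rel_map K n m _ (rel_XH K n m))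

lemma det_map {S S' : Type u} [CommRing S] [CommRing S'] [Algebra K S] [Algebra K S']
    (f : S →ₐ[K] S') (M : Matrix (Fin n) (Fin n) S) : (M.map ⇑f).det = f M.det := by
  rw [AlgHom.map_det, AlgHom.mapMatrix_apply]

lemma Zd_det : (tH K n m ⊗ₜ[K] tH K n m) * (Zd K n m).det = 1 := by
  rw [Zd, Matrix.det_mul, det_map, det_map]
  rw [Algebra.TensorProduct.includeLeft_apply, Algebra.TensorProduct.includeRight_apply,
    Algebra.TensorProduct.tmul_mul_tmul, Algebra.TensorProduct.tmul_mul_tmul,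
    mul_one, one_mul, tH_mul_det]
  rw [← Algebra.TensorProduct.one_def]

lemma Zd_apply (k i : Fin n) :
    Zd K n m k i = ∑ j, XH K n m k j ⊗ₜ[K] XH K n m j i := by
  rw [Zd, Matrix.mul_apply]
  refine Finset.sum_congr rfl fun j _ => ?_
  rw [Matrix.map_apply, Matrix.map_apply, Algebra.TensorProduct.includeLeft_apply,
    Algebra.TensorProduct.includeRight_apply, Algebra.TensorProduct.tmul_mul_tmul,
    mul_one, one_mul]

/-- comultiplication as an algebra hom -/
def ΔA : Hb K n m →ₐ[K] Hb K n m ⊗[K] Hb K n m :=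
  liftH K n m (Zd K n m) (tH K n m ⊗ₜ[K] tH K n m) (rel_Zd K n m) (Zd_det K n m)

lemma ΔA_x (k i : Fin n) :
    ΔA K n m (XH K n m k i) = ∑ j, XH K n m k j ⊗ₜ[K] XH K n m j i := by
  rw [ΔA, liftH_x, Zd_apply]

lemma ΔA_t : ΔA K n m (tH K n m) = tH K n m ⊗ₜ[K] tH K n m := by
  rw [ΔA, liftH_t]

/-- counit as an algebra hom -/
def εA : Hb K n m →ₐ[K] K :=
  liftH K n m (1 : Matrix (Fin n) (Fin n) K) 1 (rel_one K n m) (by simp)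

lemma εA_x (k i : Fin n) :
    εA K n m (XH K n m k i) = if k = i then 1 else 0 := by
  rw [εA, liftH_x, Matrix.one_apply]

lemma εA_t : εA K n m (tH K n m) = 1 := by
  rw [εA, liftH_t]

/-- the inverse matrix of `XH` -/
def Wm : Matrix (Fin n) (Fin n) (Hb K n m) := tH K n m • (XH K n m).adjugate

lemma XH_mul_Wm : XH K n m * Wm K n m = 1 := by
  rw [Wm, Matrix.mul_smul, Matrix.mul_adjugate, smul_smul, tH_mul_det, one_smul]

lemma Wm_mul_XH : Wm K n m * XH K n m = 1 := by
  rw [Wm, Matrix.smul_mul, Matrix.adjugate_mul, smul_smul, tH_mul_det, one_smul]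

lemma rel_Wm : Rel K n m (Wm K n m) :=
  rel_inv K n m (rel_XH K n m) (XH_mul_Wm K n m) (Wm_mul_XH K n m)

lemma det_Wm : (XH K n m).det * (Wm K n m).det = 1 := by
  rw [← Matrix.det_mul, XH_mul_Wm, Matrix.det_one]

/-- antipode as an algebra hom -/
def SA : Hb K n m →ₐ[K] Hb K n m :=
  liftH K n m (Wm K n m) (XH K n m).det (rel_Wm K n m) (det_Wm K n m)

lemma SA_x (k i : Fin n) : SA K n m (XH K n m k i) = Wm K n m k i := by
  rw [SA, liftH_x]

lemma SA_t : SA K n m (tH K n m) = (XH K n m).det := by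
  rw [SA, liftH_t]

end structureMaps

section instances

/-- bridge: algebra tensor map vs linear tensor map -/
lemma mapLin {S S' T T' : Type u} [CommRing S] [CommRing S'] [CommRing T] [CommRing T']
    [Algebra K S] [Algebra K S'] [Algebra K T] [Algebra K T']
    (f : S →ₐ[K] T) (g : S' →ₐ[K] T') :
    (Algebra.TensorProduct.map f g).toLinearMap
      = TensorProduct.map f.toLinearMap g.toLinearMap :=
  TensorProduct.ext' (fun x y => by simp)

lemma assocLin {S : Type u} [CommRing S] [Algebra K S] :
    ((Algebra.TensorProduct.assoc K K K S S S : (S ⊗[K] S) ⊗[K] S ≃ₐ[K] S ⊗[K] (S ⊗[K] S))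
        : (S ⊗[K] S) ⊗[K] S →ₗ[K] S ⊗[K] (S ⊗[K] S))
      = (TensorProduct.assoc K S S S : (S ⊗[K] S) ⊗[K] S →ₗ[K] S ⊗[K] (S ⊗[K] S)) := by
  rfl

lemma coassoc_algHom :
    ((Algebra.TensorProduct.assoc K K K (Hb K n m) (Hb K n m) (Hb K n m)).toAlgHom.comp
      ((Algebra.TensorProduct.map (ΔA K n m) (AlgHom.id K (Hb K n m))).comp (ΔA K n m)))
    = (Algebra.TensorProduct.map (AlgHom.id K (Hb K n m)) (ΔA K n m)).comp (ΔA K n m) := by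
  apply hom_ext K n m (S := Hb K n m ⊗[K] (Hb K n m ⊗[K] Hb K n m))
  · intro k i
    simp only [AlgHom.coe_comp, Function.comp_apply, AlgEquiv.toAlgHom_eq_coe,
      AlgEquiv.coe_algHom, ΔA_x, map_sum, Algebra.TensorProduct.map_tmul,
      AlgHom.coe_id, id_eq, Algebra.TensorProduct.assoc_tmul,
      TensorProduct.sum_tmul, TensorProduct.tmul_sum]
    rw [Finset.sum_comm]
  · simp only [AlgHom.coe_comp, Function.comp_apply, AlgEquiv.toAlgHom_eq_coe,
      AlgEquiv.coe_algHom, ΔA_t, Algebra.TensorProduct.map_tmul,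
      AlgHom.coe_id, id_eq]
    exact Algebra.TensorProduct.assoc_tmul (R := K) (S := K) (T := K) (A := Hb K n m) (C := Hb K n m) (D := Hb K n m) (tH K n m) (tH K n m) (tH K n m)

lemma rTensor_counit_algHom :
    (Algebra.TensorProduct.map (εA K n m) (AlgHom.id K (Hb K n m))).comp (ΔA K n m)
      = Algebra.TensorProduct.includeRight := by
  apply hom_ext K n m (S := K ⊗[K] Hb K n m)
  · intro k i
    simp only [AlgHom.coe_comp, Function.comp_apply, ΔA_x, map_sum,
      Algebra.TensorProduct.map_tmul, AlgHom.coe_id, id_eq, εA_x,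
      Algebra.TensorProduct.includeRight_apply]
    have : ∀ j : Fin n, ((if k = j then (1:K) else 0) ⊗ₜ[K] XH K n m j i)
        = if k = j then ((1:K) ⊗ₜ[K] XH K n m j i) else 0 := by
      intro j; split_ifs <;> simp
    rw [Finset.sum_congr rfl fun j _ => this j, Finset.sum_ite_eq]
    simp
  · simp only [AlgHom.coe_comp, Function.comp_apply, ΔA_t,
      Algebra.TensorProduct.map_tmul, AlgHom.coe_id, id_eq, εA_t,
      Algebra.TensorProduct.includeRight_apply]

lemma lTensor_counit_algHom :
    (Algebra.TensorProduct.map (AlgHom.id K (Hb K n m)) (εA K n m)).comp (ΔA K n m)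
      = Algebra.TensorProduct.includeLeft := by
  apply hom_ext K n m (S := Hb K n m ⊗[K] K)
  · intro k i
    simp only [AlgHom.coe_comp, Function.comp_apply, ΔA_x, map_sum,
      Algebra.TensorProduct.map_tmul, AlgHom.coe_id, id_eq, εA_x,
      Algebra.TensorProduct.includeLeft_apply]
    have : ∀ j : Fin n, (XH K n m k j ⊗ₜ[K] (if j = i then (1:K) else 0))
        = if j = i then (XH K n m k j ⊗ₜ[K] (1:K)) else 0 := by
      intro j; split_ifs <;> simp
    rw [Finset.sum_congr rfl fun j _ => this j, Finset.sum_ite_eq']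
    simp
  · simp only [AlgHom.coe_comp, Function.comp_apply, ΔA_t,
      Algebra.TensorProduct.map_tmul, AlgHom.coe_id, id_eq, εA_t,
      Algebra.TensorProduct.includeLeft_apply]

instance : Coalgebra K (Hb K n m) where
  comul := (ΔA K n m).toLinearMap
  counit := (εA K n m).toLinearMap
  coassoc := by
    have h := congrArg AlgHom.toLinearMap (coassoc_algHom K n m)
    rw [AlgHom.comp_toLinearMap, AlgHom.comp_toLinearMap, AlgHom.comp_toLinearMap,
      mapLin, mapLin] at h
    calc (TensorProduct.assoc K (Hb K n m) (Hb K n m) (Hb K n m)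
            : (Hb K n m ⊗[K] Hb K n m) ⊗[K] Hb K n m →ₗ[K] _)
          ∘ₗ (ΔA K n m).toLinearMap.rTensor (Hb K n m) ∘ₗ (ΔA K n m).toLinearMap
        = ((Algebra.TensorProduct.assoc K K K (Hb K n m) (Hb K n m) (Hb K n m)).toAlgHom
            : _ →ₐ[K] _).toLinearMap
          ∘ₗ TensorProduct.map (ΔA K n m).toLinearMap (AlgHom.id K (Hb K n m)).toLinearMap
          ∘ₗ (ΔA K n m).toLinearMap := by
          rw [← assocLin]; rfl
      _ = TensorProduct.map (AlgHom.id K (Hb K n m)).toLinearMap (ΔA K n m).toLinearMap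
          ∘ₗ (ΔA K n m).toLinearMap := h
      _ = (ΔA K n m).toLinearMap.lTensor (Hb K n m) ∘ₗ (ΔA K n m).toLinearMap := rfl
  rTensor_counit_comp_comul := by
    have h := congrArg AlgHom.toLinearMap (rTensor_counit_algHom K n m)
    rw [AlgHom.comp_toLinearMap, mapLin] at h
    calc (εA K n m).toLinearMap.rTensor (Hb K n m) ∘ₗ (ΔA K n m).toLinearMap
        = TensorProduct.map (εA K n m).toLinearMap (AlgHom.id K (Hb K n m)).toLinearMap
            ∘ₗ (ΔA K n m).toLinearMap := rfl
      _ = (Algebra.TensorProduct.includeRight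
            : Hb K n m →ₐ[K] K ⊗[K] Hb K n m).toLinearMap := h
      _ = TensorProduct.mk K K (Hb K n m) 1 := by ext x; rfl
  lTensor_counit_comp_comul := by
    have h := congrArg AlgHom.toLinearMap (lTensor_counit_algHom K n m)
    rw [AlgHom.comp_toLinearMap, mapLin] at h
    calc (εA K n m).toLinearMap.lTensor (Hb K n m) ∘ₗ (ΔA K n m).toLinearMap
        = TensorProduct.map (AlgHom.id K (Hb K n m)).toLinearMap (εA K n m).toLinearMap
            ∘ₗ (ΔA K n m).toLinearMap := rfl
      _ = (Algebra.TensorProduct.includeLeft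
            : Hb K n m →ₐ[K] Hb K n m ⊗[K] K).toLinearMap := h
      _ = (TensorProduct.mk K (Hb K n m) K).flip 1 := by ext x; rfl

lemma comul_def : Coalgebra.comul (R := K) (A := Hb K n m) = (ΔA K n m).toLinearMap := rfl
lemma counit_def : Coalgebra.counit (R := K) (A := Hb K n m) = (εA K n m).toLinearMap := rfl

instance : Bialgebra K (Hb K n m) :=
  Bialgebra.mk' K (Hb K n m) (map_one (εA K n m)) (fun {a b} => map_mul (εA K n m) a b)
    (map_one (ΔA K n m)) (fun {a b} => map_mul (ΔA K n m) a b)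

lemma antipode_rTensor_algHom :
    (Algebra.TensorProduct.lmul' K (S := Hb K n m)).comp
      ((Algebra.TensorProduct.map (SA K n m) (AlgHom.id K (Hb K n m))).comp (ΔA K n m))
    = (Algebra.ofId K (Hb K n m)).comp (εA K n m) := by
  apply hom_ext K n m (S := Hb K n m)
  · intro k i
    simp only [AlgHom.coe_comp, Function.comp_apply, ΔA_x, map_sum,
      Algebra.TensorProduct.map_tmul, AlgHom.coe_id, id_eq, SA_x,
      Algebra.TensorProduct.lmul'_apply_tmul, εA_x]
    have : ∑ j, Wm K n m k j * XH K n m j i = (1 : Matrix (Fin n) (Fin n) (Hb K n m)) k i := by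
      rw [← Wm_mul_XH K n m, Matrix.mul_apply]
    rw [this, Matrix.one_apply, Algebra.ofId_apply]
    split_ifs <;> simp
  · simp only [AlgHom.coe_comp, Function.comp_apply, ΔA_t,
      Algebra.TensorProduct.map_tmul, AlgHom.coe_id, id_eq, SA_t,
      Algebra.TensorProduct.lmul'_apply_tmul, εA_t]
    rw [mul_comm, tH_mul_det, Algebra.ofId_apply]
    simp

lemma antipode_lTensor_algHom :
    (Algebra.TensorProduct.lmul' K (S := Hb K n m)).comp
      ((Algebra.TensorProduct.map (AlgHom.id K (Hb K n m)) (SA K n m)).comp (ΔA K n m))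
    = (Algebra.ofId K (Hb K n m)).comp (εA K n m) := by
  apply hom_ext K n m (S := Hb K n m)
  · intro k i
    simp only [AlgHom.coe_comp, Function.comp_apply, ΔA_x, map_sum,
      Algebra.TensorProduct.map_tmul, AlgHom.coe_id, id_eq, SA_x,
      Algebra.TensorProduct.lmul'_apply_tmul, εA_x]
    have : ∑ j, XH K n m k j * Wm K n m j i = (1 : Matrix (Fin n) (Fin n) (Hb K n m)) k i := by
      rw [← XH_mul_Wm K n m, Matrix.mul_apply]
    rw [this, Matrix.one_apply, Algebra.ofId_apply]
    split_ifs <;> simp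
  · simp only [AlgHom.coe_comp, Function.comp_apply, ΔA_t,
      Algebra.TensorProduct.map_tmul, AlgHom.coe_id, id_eq, SA_t,
      Algebra.TensorProduct.lmul'_apply_tmul, εA_t]
    rw [tH_mul_det, Algebra.ofId_apply]
    simp

instance : HopfAlgebra K (Hb K n m) where
  antipode := (SA K n m).toLinearMap
  mul_antipode_rTensor_comul := by
    have h := congrArg AlgHom.toLinearMap (antipode_rTensor_algHom K n m)
    rw [AlgHom.comp_toLinearMap, AlgHom.comp_toLinearMap, mapLin,
      Algebra.TensorProduct.lmul'_toLinearMap] at h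
    calc LinearMap.mul' K (Hb K n m) ∘ₗ (SA K n m).toLinearMap.rTensor (Hb K n m)
          ∘ₗ (ΔA K n m).toLinearMap
        = LinearMap.mul' K (Hb K n m)
          ∘ₗ TensorProduct.map (SA K n m).toLinearMap (AlgHom.id K (Hb K n m)).toLinearMap
          ∘ₗ (ΔA K n m).toLinearMap := rfl
      _ = ((Algebra.ofId K (Hb K n m)).comp (εA K n m)).toLinearMap := h
      _ = Algebra.linearMap K (Hb K n m) ∘ₗ (εA K n m).toLinearMap := by ext x; rfl
  mul_antipode_lTensor_comul := by
    have h := congrArg AlgHom.toLinearMap (antipode_lTensor_algHom K n m)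
    rw [AlgHom.comp_toLinearMap, AlgHom.comp_toLinearMap, mapLin,
      Algebra.TensorProduct.lmul'_toLinearMap] at h
    calc LinearMap.mul' K (Hb K n m) ∘ₗ (SA K n m).toLinearMap.lTensor (Hb K n m)
          ∘ₗ (ΔA K n m).toLinearMap
        = LinearMap.mul' K (Hb K n m)
          ∘ₗ TensorProduct.map (AlgHom.id K (Hb K n m)).toLinearMap (SA K n m).toLinearMap
          ∘ₗ (ΔA K n m).toLinearMap := rfl
      _ = ((Algebra.ofId K (Hb K n m)).comp (εA K n m)).toLinearMap := h
      _ = Algebra.linearMap K (Hb K n m) ∘ₗ (εA K n m).toLinearMap := by ext x; rfl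

end instances

section basisSide

variable {A : Type u} [NonUnitalRing A] [Module K A] [SMulCommClass K A A] [IsScalarTower K A A]
variable (b : Module.Basis (Fin n) K A)

/-- structure constants -/
def sc : Fin n → Fin n → Fin n → K := fun i j r => b.repr (b i * b j) r

lemma mul_basis (i j : Fin n) : b i * b j = ∑ r, sc K n b i j r • b r :=
  (b.sum_repr (b i * b j)).symm

variable (M : Type u) [AddCommGroup M] [Module K M]

/-- coefficient extraction -/
def coeffE : (A ⊗[K] M) ≃ₗ[K] (Fin n →₀ M) :=
  (TensorProduct.congr b.repr (LinearEquiv.refl K M)).trans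
    (TensorProduct.finsuppScalarLeft K M (Fin n))

lemma coeffE_tmul (a : A) (v : M) (k : Fin n) :
    coeffE K n b M (a ⊗ₜ[K] v) k = b.repr a k • v := by
  simp [coeffE]

lemma coeffE_sum (c : Fin n → M) (j : Fin n) :
    coeffE K n b M (∑ k, b k ⊗ₜ[K] c k) j = c j := by
  rw [map_sum, Finsupp.finset_sum_apply]
  have hk : ∀ k, coeffE K n b M (b k ⊗ₜ[K] c k) j = ((Finsupp.single k (1:K)) j) • c k := by
    intro k; rw [coeffE_tmul, Module.Basis.repr_self]
  rw [Finset.sum_congr rfl fun k _ => hk k]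
  simp [Finsupp.single_apply, ite_smul]

lemma coeff_ext {c d : Fin n → M}
    (h : ∑ k, b k ⊗ₜ[K] c k = ∑ k, b k ⊗ₜ[K] d k) : ∀ j, c j = d j := by
  intro j
  have := congrArg (fun z => coeffE K n b M z j) h
  simpa only [coeffE_sum] using this

lemma tmul_expand (z : A ⊗[K] M) : z = ∑ k, b k ⊗ₜ[K] coeffE K n b M z k := by
  have hid : (LinearMap.id : A ⊗[K] M →ₗ[K] A ⊗[K] M)
      = ∑ k : Fin n, (TensorProduct.mk K A M (b k)).comp
          ((Finsupp.lapply k).comp (coeffE K n b M).toLinearMap) := by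
    apply TensorProduct.ext'
    intro a v
    simp only [LinearMap.id_coe, id_eq, LinearMap.sum_apply, LinearMap.coe_comp,
      Function.comp_apply, LinearEquiv.coe_coe, Finsupp.lapply_apply,
      TensorProduct.mk_apply, coeffE_tmul]
    calc a ⊗ₜ[K] v = (∑ k, b.repr a k • b k) ⊗ₜ[K] v := by rw [b.sum_repr a]
      _ = ∑ k, b k ⊗ₜ[K] (b.repr a k • v) := by
          rw [TensorProduct.sum_tmul]
          exact Finset.sum_congr rfl fun k _ => TensorProduct.smul_tmul _ _ _
  have h := congrArg (fun f : A ⊗[K] M →ₗ[K] A ⊗[K] M => f z) hid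
  simpa using h

end basisSide

section coactionA

variable {A : Type u} [NonUnitalRing A] [Module K A] [SMulCommClass K A A] [IsScalarTower K A A]
variable (b : Module.Basis (Fin n) K A)

/-- the coaction, as a linear map -/
def lamL : A →ₗ[K] A ⊗[K] Hb K n (sc K n b) :=
  Module.Basis.constr b K (fun i => ∑ k, b k ⊗ₜ[K] XH K n (sc K n b) k i)

lemma lamL_basis (i : Fin n) :
    lamL K n b (b i) = ∑ k, b k ⊗ₜ[K] XH K n (sc K n b) k i :=
  b.constr_basis K _ i

lemma key_mul (i j : Fin n) :
    lamL K n b (b i) * lamL K n b (b j) = lamL K n b (b i * b j) := by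
  rw [lamL_basis, lamL_basis]
  calc (∑ k, b k ⊗ₜ[K] XH K n (sc K n b) k i) * (∑ l, b l ⊗ₜ[K] XH K n (sc K n b) l j)
      = ∑ k, ∑ l, (b k * b l) ⊗ₜ[K] (XH K n (sc K n b) k i * XH K n (sc K n b) l j) := by
        rw [Finset.sum_mul_sum]
        exact Finset.sum_congr rfl fun k _ => Finset.sum_congr rfl fun l _ =>
          Algebra.TensorProduct.tmul_mul_tmul _ _ _ _
    _ = ∑ k, ∑ l, ∑ r, sc K n b k l r •
          (b r ⊗ₜ[K] (XH K n (sc K n b) k i * XH K n (sc K n b) l j)) := by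
        refine Finset.sum_congr rfl fun k _ => Finset.sum_congr rfl fun l _ => ?_
        rw [mul_basis K n b k l, TensorProduct.sum_tmul]
        exact Finset.sum_congr rfl fun r _ => (TensorProduct.smul_tmul' _ _ _).symm
    _ = ∑ r, ∑ k, ∑ l, sc K n b k l r •
          (b r ⊗ₜ[K] (XH K n (sc K n b) k i * XH K n (sc K n b) l j)) := by
        rw [Finset.sum_congr rfl fun k (_ : k ∈ Finset.univ) =>
          (Finset.sum_comm (s := Finset.univ) (t := Finset.univ) (f := fun l r => sc K n b k l r •
            (b r ⊗ₜ[K] (XH K n (sc K n b) k i * XH K n (sc K n b) l j))))]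
        rw [Finset.sum_comm]
    _ = ∑ r, b r ⊗ₜ[K] (∑ k, ∑ l, sc K n b k l r •
          (XH K n (sc K n b) k i * XH K n (sc K n b) l j)) := by
        refine Finset.sum_congr rfl fun r _ => ?_
        rw [TensorProduct.tmul_sum]
        refine Finset.sum_congr rfl fun k _ => ?_
        rw [TensorProduct.tmul_sum]
        exact Finset.sum_congr rfl fun l _ => (TensorProduct.tmul_smul _ _ _).symm
    _ = ∑ r, b r ⊗ₜ[K] (∑ c, sc K n b i j c • XH K n (sc K n b) r c) := by
        refine Finset.sum_congr rfl fun r _ => ?_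
        rw [rel_XH K n (sc K n b) i j r]
    _ = ∑ r, ∑ c, sc K n b i j c • (b r ⊗ₜ[K] XH K n (sc K n b) r c) := by
        refine Finset.sum_congr rfl fun r _ => ?_
        rw [TensorProduct.tmul_sum]
        exact Finset.sum_congr rfl fun c _ => (TensorProduct.tmul_smul _ _ _)
    _ = ∑ c, ∑ r, sc K n b i j c • (b r ⊗ₜ[K] XH K n (sc K n b) r c) := by
        rw [Finset.sum_comm]
    _ = ∑ c, sc K n b i j c • ∑ r, b r ⊗ₜ[K] XH K n (sc K n b) r c :=
        Finset.sum_congr rfl fun c _ => (Finset.smul_sum).symm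
    _ = lamL K n b (b i * b j) := by
        rw [mul_basis K n b i j, map_sum]
        refine (Finset.sum_congr rfl fun c _ => ?_).symm
        rw [_root_.map_smul, lamL_basis]

lemma lamL_mul (a a' : A) :
    lamL K n b (a * a') = lamL K n b a * lamL K n b a' := by
  have h : (LinearMap.mul K A).compr₂ (lamL K n b)
      = (LinearMap.mul K (A ⊗[K] Hb K n (sc K n b))).compl₁₂ (lamL K n b) (lamL K n b) := by
    apply b.ext; intro i
    apply b.ext; intro j
    simp only [LinearMap.compr₂_apply, LinearMap.compl₁₂_apply, LinearMap.mul_apply']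
    exact (key_mul K n b i j).symm
  have := DFunLike.congr_fun (DFunLike.congr_fun h a) a'
  simpa only [LinearMap.compr₂_apply, LinearMap.compl₁₂_apply, LinearMap.mul_apply'] using this

/-- the coaction, as a non-unital algebra hom -/
def lamA : A →ₙₐ[K] A ⊗[K] Hb K n (sc K n b) :=
  { lamL K n b with
    map_zero' := map_zero (lamL K n b)
    map_mul' := lamL_mul K n b
    map_smul' := fun c x => (lamL K n b).map_smul c x }

lemma lamA_apply (a : A) : lamA K n b a = lamL K n b a := rfl

lemma lam_counit (a : A) :
    TensorProduct.rid K A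
      (LinearMap.lTensor A (εA K n (sc K n b)).toLinearMap (lamL K n b a)) = a := by
  have h : (TensorProduct.rid K A).toLinearMap
      ∘ₗ LinearMap.lTensor A (εA K n (sc K n b)).toLinearMap ∘ₗ lamL K n b
      = LinearMap.id := by
    apply b.ext; intro i
    simp only [LinearMap.coe_comp, Function.comp_apply, LinearEquiv.coe_coe,
      LinearMap.id_coe, id_eq, lamL_basis, map_sum, LinearMap.lTensor_tmul,
      AlgHom.toLinearMap_apply, εA_x, TensorProduct.rid_tmul, ite_smul, one_smul, zero_smul]
    simp
  exact DFunLike.congr_fun h a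

lemma lam_coassoc (a : A) :
    LinearMap.lTensor A (ΔA K n (sc K n b)).toLinearMap (lamL K n b a)
      = TensorProduct.assoc K A (Hb K n (sc K n b)) (Hb K n (sc K n b))
          (LinearMap.rTensor (Hb K n (sc K n b)) (lamL K n b) (lamL K n b a)) := by
  have h : LinearMap.lTensor A (ΔA K n (sc K n b)).toLinearMap ∘ₗ lamL K n b
      = (TensorProduct.assoc K A (Hb K n (sc K n b)) (Hb K n (sc K n b)) :
            (A ⊗[K] Hb K n (sc K n b)) ⊗[K] Hb K n (sc K n b) →ₗ[K] _)
          ∘ₗ LinearMap.rTensor (Hb K n (sc K n b)) (lamL K n b) ∘ₗ lamL K n b := by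
    apply b.ext; intro i
    simp only [LinearMap.coe_comp, Function.comp_apply, LinearEquiv.coe_coe,
      lamL_basis, map_sum, LinearMap.lTensor_tmul, LinearMap.rTensor_tmul,
      AlgHom.toLinearMap_apply, ΔA_x, TensorProduct.tmul_sum, TensorProduct.sum_tmul,
      TensorProduct.assoc_tmul]
    rw [Finset.sum_comm]
  exact DFunLike.congr_fun h a

end coactionA

section universalSide

variable {A : Type u} [NonUnitalRing A] [Module K A] [SMulCommClass K A A] [IsScalarTower K A A]
variable (b : Module.Basis (Fin n) K A)
variable (H' : Type u) [CommRing H'] [HopfAlgebra K H'] (ψ : A →ₙₐ[K] A ⊗[K] H')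

/-- coefficient matrix of a coaction -/
def Ym : Matrix (Fin n) (Fin n) H' :=
  Matrix.of fun k i => coeffE K n b H' (ψ (b i)) k

lemma hy (i : Fin n) : ψ (b i) = ∑ k, b k ⊗ₜ[K] Ym K n b H' ψ k i :=
  tmul_expand K n b H' (ψ (b i))

lemma repr_sum_smul (c : Fin n → K) (j : Fin n) : b.repr (∑ k, c k • b k) j = c j := by
  rw [map_sum, Finsupp.finset_sum_apply]
  simp [Module.Basis.repr_self, Finsupp.single_apply]

lemma counit_Ym
    (hψc : ∀ a : A, TensorProduct.rid K A
      (LinearMap.lTensor A (Coalgebra.counit (R := K) (A := H')) (ψ a)) = a) (k i : Fin n) :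
    Bialgebra.counitAlgHom K H' (Ym K n b H' ψ k i) = if k = i then 1 else 0 := by
  have h := hψc (b i)
  rw [hy K n b H' ψ i] at h
  simp only [map_sum, LinearMap.lTensor_tmul, TensorProduct.rid_tmul] at h
  have h2 := congrArg (fun z => b.repr z k) h
  rw [repr_sum_smul K n b] at h2
  rw [Bialgebra.counitAlgHom_apply, h2, Module.Basis.repr_self, Finsupp.single_apply]
  simp [eq_comm]

lemma comul_Ym
    (hψa : ∀ a : A, LinearMap.lTensor A (Coalgebra.comul (R := K) (A := H')) (ψ a) =
      TensorProduct.assoc K A H' H'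
        (LinearMap.rTensor H' (ψ : A →ₗ[K] A ⊗[K] H') (ψ a))) (k i : Fin n) :
    Bialgebra.comulAlgHom K H' (Ym K n b H' ψ k i)
      = ∑ j, Ym K n b H' ψ k j ⊗ₜ[K] Ym K n b H' ψ j i := by
  have h := hψa (b i)
  rw [hy K n b H' ψ i] at h
  simp only [map_sum, LinearMap.lTensor_tmul, LinearMap.rTensor_tmul] at h
  have hrhs : ∀ c : Fin n, TensorProduct.assoc K A H' H'
      (((ψ : A →ₗ[K] A ⊗[K] H') (b c)) ⊗ₜ[K] Ym K n b H' ψ c i)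
      = ∑ j, b j ⊗ₜ[K] (Ym K n b H' ψ j c ⊗ₜ[K] Ym K n b H' ψ c i) := by
    intro c
    have : (ψ : A →ₗ[K] A ⊗[K] H') (b c) = ∑ j, b j ⊗ₜ[K] Ym K n b H' ψ j c := hy K n b H' ψ c
    rw [this, TensorProduct.sum_tmul, map_sum]
    exact Finset.sum_congr rfl fun j _ => TensorProduct.assoc_tmul _ _ _
  rw [Finset.sum_congr rfl fun c _ => hrhs c, Finset.sum_comm] at h
  have h2 := coeff_ext K n b (H' ⊗[K] H')
    (c := fun j => (Coalgebra.comul (R := K) (A := H')) (Ym K n b H' ψ j i))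
    (d := fun j => ∑ c, Ym K n b H' ψ j c ⊗ₜ[K] Ym K n b H' ψ c i)
    (by
      rw [h]
      exact Finset.sum_congr rfl fun j _ => (TensorProduct.tmul_sum _ _ _).symm)
  rw [Bialgebra.comulAlgHom_apply]
  exact h2 k

lemma relYm : Rel K n (sc K n b) (Ym K n b H' ψ) := by
  intro i j r
  have h : ψ (b i * b j) = ψ (b i) * ψ (b j) := map_mul ψ (b i) (b j)
  have hl : ψ (b i * b j) = ∑ c, b c ⊗ₜ[K] (∑ d, sc K n b i j d • Ym K n b H' ψ c d) := by
    rw [mul_basis K n b i j, map_sum]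
    calc ∑ c, ψ (sc K n b i j c • b c)
        = ∑ c, sc K n b i j c • ψ (b c) := by
          exact Finset.sum_congr rfl fun c _ => map_smul ψ _ _
      _ = ∑ c, sc K n b i j c • ∑ d, b d ⊗ₜ[K] Ym K n b H' ψ d c := by
          exact Finset.sum_congr rfl fun c _ => by rw [hy K n b H' ψ c]
      _ = ∑ c, ∑ d, b d ⊗ₜ[K] (sc K n b i j c • Ym K n b H' ψ d c) := by
          refine Finset.sum_congr rfl fun c _ => ?_
          rw [Finset.smul_sum]
          exact Finset.sum_congr rfl fun d _ => (TensorProduct.tmul_smul _ _ _).symm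
      _ = ∑ d, ∑ c, b d ⊗ₜ[K] (sc K n b i j c • Ym K n b H' ψ d c) := by
          rw [Finset.sum_comm]
      _ = ∑ d, b d ⊗ₜ[K] (∑ c, sc K n b i j c • Ym K n b H' ψ d c) := by
          exact Finset.sum_congr rfl fun d _ => (TensorProduct.tmul_sum _ _ _).symm
  have hr : ψ (b i) * ψ (b j) = ∑ c, b c ⊗ₜ[K]
      (∑ k, ∑ l, sc K n b k l c • (Ym K n b H' ψ k i * Ym K n b H' ψ l j)) := by
    rw [hy K n b H' ψ i, hy K n b H' ψ j]
    calc (∑ k, b k ⊗ₜ[K] Ym K n b H' ψ k i) * (∑ l, b l ⊗ₜ[K] Ym K n b H' ψ l j)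
        = ∑ k, ∑ l, (b k * b l) ⊗ₜ[K] (Ym K n b H' ψ k i * Ym K n b H' ψ l j) := by
          rw [Finset.sum_mul_sum]
          exact Finset.sum_congr rfl fun k _ => Finset.sum_congr rfl fun l _ =>
            Algebra.TensorProduct.tmul_mul_tmul _ _ _ _
      _ = ∑ k, ∑ l, ∑ c, b c ⊗ₜ[K]
            (sc K n b k l c • (Ym K n b H' ψ k i * Ym K n b H' ψ l j)) := by
          refine Finset.sum_congr rfl fun k _ => Finset.sum_congr rfl fun l _ => ?_
          rw [mul_basis K n b k l, TensorProduct.sum_tmul]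
          exact Finset.sum_congr rfl fun c _ => TensorProduct.smul_tmul _ _ _
      _ = ∑ c, ∑ k, ∑ l, b c ⊗ₜ[K]
            (sc K n b k l c • (Ym K n b H' ψ k i * Ym K n b H' ψ l j)) := by
          rw [Finset.sum_congr rfl fun k (_ : k ∈ Finset.univ) =>
            (Finset.sum_comm (s := Finset.univ) (t := Finset.univ)
              (f := fun l c => b c ⊗ₜ[K]
                (sc K n b k l c • (Ym K n b H' ψ k i * Ym K n b H' ψ l j))))]
          rw [Finset.sum_comm]
      _ = ∑ c, b c ⊗ₜ[K] (∑ k, ∑ l,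
            sc K n b k l c • (Ym K n b H' ψ k i * Ym K n b H' ψ l j)) := by
          refine Finset.sum_congr rfl fun c _ => ?_
          rw [TensorProduct.tmul_sum]
          exact Finset.sum_congr rfl fun k _ => (TensorProduct.tmul_sum _ _ _).symm
  have := coeff_ext K n b H' (c := fun c => ∑ k, ∑ l,
      sc K n b k l c • (Ym K n b H' ψ k i * Ym K n b H' ψ l j))
    (d := fun c => ∑ d, sc K n b i j d • Ym K n b H' ψ c d) (by rw [← hr, ← h, hl]) r
  exact this

end universalSide

section PhiSide

variable {A : Type u} [NonUnitalRing A] [Module K A] [SMulCommClass K A A] [IsScalarTower K A A]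
variable (b : Module.Basis (Fin n) K A)
variable (H' : Type u) [CommRing H'] [HopfAlgebra K H'] (ψ : A →ₙₐ[K] A ⊗[K] H')

/-- antipode applied to the coefficient matrix -/
def Wm' : Matrix (Fin n) (Fin n) H' :=
  (Ym K n b H' ψ).map (HopfAlgebra.antipode (R := K))

variable
  (hψc : ∀ a : A, TensorProduct.rid K A
    (LinearMap.lTensor A (Coalgebra.counit (R := K) (A := H')) (ψ a)) = a)
  (hψa : ∀ a : A, LinearMap.lTensor A (Coalgebra.comul (R := K) (A := H')) (ψ a) =
    TensorProduct.assoc K A H' H'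
      (LinearMap.rTensor H' (ψ : A →ₗ[K] A ⊗[K] H') (ψ a)))

include hψc hψa

lemma Wm'_mul_Ym : Wm' K n b H' ψ * Ym K n b H' ψ = 1 := by
  ext k i
  rw [Matrix.mul_apply]
  have h := HopfAlgebra.mul_antipode_rTensor_comul_apply (R := K) (Ym K n b H' ψ k i)
  have hc : Coalgebra.comul (R := K) (Ym K n b H' ψ k i)
      = ∑ j, Ym K n b H' ψ k j ⊗ₜ[K] Ym K n b H' ψ j i := by
    rw [← Bialgebra.comulAlgHom_apply K H', comul_Ym K n b H' ψ hψa]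
  rw [hc, map_sum, map_sum] at h
  simp only [LinearMap.rTensor_tmul, LinearMap.mul'_apply] at h
  have hu : Coalgebra.counit (R := K) (Ym K n b H' ψ k i) = if k = i then (1:K) else 0 := by
    rw [← Bialgebra.counitAlgHom_apply K H', counit_Ym K n b H' ψ hψc]
  rw [Matrix.one_apply]
  calc ∑ j, Wm' K n b H' ψ k j * Ym K n b H' ψ j i
      = algebraMap K H' (Coalgebra.counit (R := K) (Ym K n b H' ψ k i)) := h
    _ = if k = i then 1 else 0 := by rw [hu]; split_ifs <;> simp

lemma Ym_mul_Wm' : Ym K n b H' ψ * Wm' K n b H' ψ = 1 := by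
  ext k i
  rw [Matrix.mul_apply]
  have h := HopfAlgebra.mul_antipode_lTensor_comul_apply (R := K) (Ym K n b H' ψ k i)
  have hc : Coalgebra.comul (R := K) (Ym K n b H' ψ k i)
      = ∑ j, Ym K n b H' ψ k j ⊗ₜ[K] Ym K n b H' ψ j i := by
    rw [← Bialgebra.comulAlgHom_apply K H', comul_Ym K n b H' ψ hψa]
  rw [hc, map_sum, map_sum] at h
  simp only [LinearMap.lTensor_tmul, LinearMap.mul'_apply] at h
  have hu : Coalgebra.counit (R := K) (Ym K n b H' ψ k i) = if k = i then (1:K) else 0 := by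
    rw [← Bialgebra.counitAlgHom_apply K H', counit_Ym K n b H' ψ hψc]
  rw [Matrix.one_apply]
  calc ∑ j, Ym K n b H' ψ k j * Wm' K n b H' ψ j i
      = algebraMap K H' (Coalgebra.counit (R := K) (Ym K n b H' ψ k i)) := h
    _ = if k = i then 1 else 0 := by rw [hu]; split_ifs <;> simp

lemma detW_det : (Wm' K n b H' ψ).det * (Ym K n b H' ψ).det = 1 := by
  rw [← Matrix.det_mul, Wm'_mul_Ym K n b H' ψ hψc hψa, Matrix.det_one]

/-- the induced algebra hom -/
def Φa : Hb K n (sc K n b) →ₐ[K] H' :=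
  liftH K n (sc K n b) (Ym K n b H' ψ) (Wm' K n b H' ψ).det
    (relYm K n b H' ψ) (detW_det K n b H' ψ hψc hψa)

lemma Φa_x (k i : Fin n) :
    Φa K n b H' ψ hψc hψa (XH K n (sc K n b) k i) = Ym K n b H' ψ k i :=
  liftH_x _ _ _ _ _ _ _ k i

lemma Φa_t : Φa K n b H' ψ hψc hψa (tH K n (sc K n b)) = (Wm' K n b H' ψ).det :=
  liftH_t _ _ _ _ _ _ _

lemma counit_det_Ym : Bialgebra.counitAlgHom K H' ((Ym K n b H' ψ).det) = 1 := by
  have hone : (Ym K n b H' ψ).map (Bialgebra.counitAlgHom K H') = 1 := by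
    ext k i
    rw [Matrix.map_apply, counit_Ym K n b H' ψ hψc, Matrix.one_apply]
  have hdm := det_map K n (Bialgebra.counitAlgHom K H') (Ym K n b H' ψ)
  rw [hone, Matrix.det_one] at hdm
  exact hdm.symm

lemma counit_det_Wm' : Bialgebra.counitAlgHom K H' ((Wm' K n b H' ψ).det) = 1 := by
  have h := congrArg (Bialgebra.counitAlgHom K H') (detW_det K n b H' ψ hψc hψa)
  rw [_root_.map_mul, _root_.map_one, counit_det_Ym K n b H' ψ hψc hψa, mul_one] at h
  exact h

lemma counit_comp_Φa :
    (Bialgebra.counitAlgHom K H').comp (Φa K n b H' ψ hψc hψa) = εA K n (sc K n b) := by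
  apply hom_ext K n (sc K n b) (S := K)
  · intro k i
    rw [AlgHom.comp_apply, Φa_x, counit_Ym K n b H' ψ hψc, εA_x]
  · rw [AlgHom.comp_apply, Φa_t, counit_det_Wm' K n b H' ψ hψc hψa, εA_t]

lemma comul_det_Ym :
    Bialgebra.comulAlgHom K H' ((Ym K n b H' ψ).det)
      = (Ym K n b H' ψ).det ⊗ₜ[K] (Ym K n b H' ψ).det := by
  have hmat : (Ym K n b H' ψ).map (Bialgebra.comulAlgHom K H')
      = (Ym K n b H' ψ).map (Algebra.TensorProduct.includeLeft (R := K) (S := K))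
        * (Ym K n b H' ψ).map (Algebra.TensorProduct.includeRight (R := K)) := by
    ext k i
    rw [Matrix.map_apply, comul_Ym K n b H' ψ hψa, Matrix.mul_apply]
    refine Finset.sum_congr rfl fun j _ => ?_
    rw [Matrix.map_apply, Matrix.map_apply, Algebra.TensorProduct.includeLeft_apply,
      Algebra.TensorProduct.includeRight_apply, Algebra.TensorProduct.tmul_mul_tmul,
      mul_one, one_mul]
  have hdm := det_map K n (Bialgebra.comulAlgHom K H') (Ym K n b H' ψ)
  rw [hmat, Matrix.det_mul, det_map, det_map] at hdm
  rw [← hdm, Algebra.TensorProduct.includeLeft_apply, Algebra.TensorProduct.includeRight_apply,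
    Algebra.TensorProduct.tmul_mul_tmul, mul_one, one_mul]

lemma comul_det_Wm' :
    Bialgebra.comulAlgHom K H' ((Wm' K n b H' ψ).det)
      = (Wm' K n b H' ψ).det ⊗ₜ[K] (Wm' K n b H' ψ).det := by
  set g := (Ym K n b H' ψ).det with hg
  set w := (Wm' K n b H' ψ).det with hw
  have hwg : w * g = 1 := detW_det K n b H' ψ hψc hψa
  have hgw : g * w = 1 := by rw [mul_comm]; exact hwg
  calc Bialgebra.comulAlgHom K H' w
      = Bialgebra.comulAlgHom K H' w * ((g ⊗ₜ[K] g) * (w ⊗ₜ[K] w)) := by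
        rw [Algebra.TensorProduct.tmul_mul_tmul, hgw, ← Algebra.TensorProduct.one_def, mul_one]
    _ = (Bialgebra.comulAlgHom K H' w * Bialgebra.comulAlgHom K H' g) * (w ⊗ₜ[K] w) := by
        rw [comul_det_Ym K n b H' ψ hψc hψa, mul_assoc]
    _ = Bialgebra.comulAlgHom K H' (w * g) * (w ⊗ₜ[K] w) := by rw [_root_.map_mul]
    _ = w ⊗ₜ[K] w := by rw [hwg, _root_.map_one, one_mul]

lemma comul_comp_Φa :
    (Bialgebra.comulAlgHom K H').comp (Φa K n b H' ψ hψc hψa)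
      = (Algebra.TensorProduct.map (Φa K n b H' ψ hψc hψa) (Φa K n b H' ψ hψc hψa)).comp
          (ΔA K n (sc K n b)) := by
  apply hom_ext K n (sc K n b) (S := H' ⊗[K] H')
  · intro k i
    rw [AlgHom.comp_apply, AlgHom.comp_apply, Φa_x, comul_Ym K n b H' ψ hψa, ΔA_x, map_sum]
    exact Finset.sum_congr rfl fun j _ => by
      rw [Algebra.TensorProduct.map_tmul, Φa_x, Φa_x]
  · rw [AlgHom.comp_apply, AlgHom.comp_apply, Φa_t, comul_det_Wm' K n b H' ψ hψc hψa, ΔA_t,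
      Algebra.TensorProduct.map_tmul, Φa_t]

/-- the induced bialgebra hom -/
def ΦB : Hb K n (sc K n b) →ₐc[K] H' :=
  { toLinearMap := (Φa K n b H' ψ hψc hψa).toLinearMap
    counit_comp := by
      have hc := congrArg AlgHom.toLinearMap (counit_comp_Φa K n b H' ψ hψc hψa)
      rw [AlgHom.comp_toLinearMap] at hc
      exact hc
    map_comp_comul := by
      have hm := congrArg AlgHom.toLinearMap (comul_comp_Φa K n b H' ψ hψc hψa)
      rw [AlgHom.comp_toLinearMap, AlgHom.comp_toLinearMap, mapLin] at hm
      exact hm.symm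
    map_one' := _root_.map_one (Φa K n b H' ψ hψc hψa)
    map_mul' := _root_.map_mul (Φa K n b H' ψ hψc hψa) }

lemma ΦB_apply (z : Hb K n (sc K n b)) :
    ΦB K n b H' ψ hψc hψa z = Φa K n b H' ψ hψc hψa z := rfl

lemma ΦB_prop (a : A) :
    ψ a = LinearMap.lTensor A (ΦB K n b H' ψ hψc hψa).toLinearMap (lamL K n b a) := by
  have h : (ψ : A →ₗ[K] A ⊗[K] H')
      = LinearMap.lTensor A (Φa K n b H' ψ hψc hψa).toLinearMap ∘ₗ lamL K n b := by
    apply b.ext; intro i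
    rw [LinearMap.coe_comp, Function.comp_apply, lamL_basis, map_sum]
    calc (ψ : A →ₗ[K] A ⊗[K] H') (b i) = ∑ k, b k ⊗ₜ[K] Ym K n b H' ψ k i := hy K n b H' ψ i
      _ = ∑ k, LinearMap.lTensor A (Φa K n b H' ψ hψc hψa).toLinearMap
            (b k ⊗ₜ[K] XH K n (sc K n b) k i) := by
          refine Finset.sum_congr rfl fun k _ => ?_
          rw [LinearMap.lTensor_tmul, AlgHom.toLinearMap_apply, Φa_x]
  exact DFunLike.congr_fun h a

lemma ΦB_unique (Φ' : Hb K n (sc K n b) →ₐc[K] H')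
    (hprop : ∀ a : A, ψ a = LinearMap.lTensor A Φ'.toLinearMap (lamL K n b a)) :
    Φ' = ΦB K n b H' ψ hψc hψa := by
  have hgx : ∀ k i, Φ' (XH K n (sc K n b) k i) = Ym K n b H' ψ k i := by
    intro k i
    have h := hprop (b i)
    rw [lamL_basis, map_sum] at h
    simp only [LinearMap.lTensor_tmul] at h
    rw [hy K n b H' ψ i] at h
    exact (coeff_ext K n b H'
      (c := fun k => Ym K n b H' ψ k i)
      (d := fun k => Φ'.toLinearMap (XH K n (sc K n b) k i)) h k).symm
  have hgA : (Φ' : Hb K n (sc K n b) →ₐ[K] H') = Φa K n b H' ψ hψc hψa := by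
    apply hom_ext K n (sc K n b) (S := H')
    · intro k i
      rw [BialgHom.coe_toAlgHom, hgx, Φa_x]
    · have hdet : (Φ' : Hb K n (sc K n b) →ₐ[K] H') ((XH K n (sc K n b)).det)
          = (Ym K n b H' ψ).det := by
        rw [← det_map K n ((Φ' : Hb K n (sc K n b) →ₐ[K] H')) (XH K n (sc K n b))]
        congr 1
        ext k i
        rw [Matrix.map_apply, BialgHom.coe_toAlgHom, hgx]
      have h1 : (Φ' : Hb K n (sc K n b) →ₐ[K] H') (tH K n (sc K n b)) * (Ym K n b H' ψ).det
          = 1 := by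
        rw [← hdet, ← _root_.map_mul, tH_mul_det, _root_.map_one]
      calc (Φ' : Hb K n (sc K n b) →ₐ[K] H') (tH K n (sc K n b))
          = (Φ' : Hb K n (sc K n b) →ₐ[K] H') (tH K n (sc K n b))
            * ((Wm' K n b H' ψ).det * (Ym K n b H' ψ).det) := by
            rw [detW_det K n b H' ψ hψc hψa, mul_one]
        _ = ((Φ' : Hb K n (sc K n b) →ₐ[K] H') (tH K n (sc K n b)) * (Ym K n b H' ψ).det)
            * (Wm' K n b H' ψ).det := by ring
        _ = (Wm' K n b H' ψ).det := by rw [h1, one_mul]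
        _ = Φa K n b H' ψ hψc hψa (tH K n (sc K n b)) := (Φa_t K n b H' ψ hψc hψa).symm
  apply BialgHom.ext
  intro z
  have := AlgHom.congr_fun hgA z
  rw [BialgHom.coe_toAlgHom] at this
  rw [this, ΦB_apply]

end PhiSide

end UACH

/-- Every finite-dimensional non-unital associative algebra over a field of characteristic
zero admits a universal coacting commutative Hopf algebra. -/
theorem exists_universalAlgCoactingHopfAlgebra
    (K : Type u) [Field K] [CharZero K]
    (A : Type u) [NonUnitalRing A] [Module K A] [SMulCommClass K A A] [IsScalarTower K A A]
    [FiniteDimensional K A] :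
    Nonempty (UniversalAlgCoactingHopfAlgebra K A) := by
  classical
  refine ⟨{ H := UACH.Hb K (Module.finrank K A)
              (UACH.sc K (Module.finrank K A) (Module.finBasis K A)),
            lam := UACH.lamA K (Module.finrank K A) (Module.finBasis K A),
            coaction := ?_,
            universal := ?_ }⟩
  · constructor
    · intro a
      exact UACH.lam_counit K _ (Module.finBasis K A) a
    · intro a
      exact UACH.lam_coassoc K _ (Module.finBasis K A) a
  · intro H' _ _ ψ hψ
    refine ⟨UACH.ΦB K _ (Module.finBasis K A) H' ψ hψ.1 hψ.2, ?_, ?_⟩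
    · intro a
      exact UACH.ΦB_prop K _ (Module.finBasis K A) H' ψ hψ.1 hψ.2 a
    · intro Φ' hΦ'
      exact UACH.ΦB_unique K _ (Module.finBasis K A) H' ψ hψ.1 hψ.2 Φ' hΦ'

end
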